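/- For all r ≥ 0 one has ψ(r) ≤ exp(∫₀^η (κ⁺(v) + c v) dv) · ψ₁(r), where ψ₁(r) = ∫₀^r e^{c s²/2} (∫_s^∞ e^{-(c-ε) u²/2} du) ds. -/

import Mathlib

open MeasureTheory Real

/-- `κ*(r) = κ⁺(r)` for `r ≤ η`, and `κ*(r) = -c r` for `r > η`. -/
noncomputable def kappaStar (c η : ℝ) (κ : ℝ → ℝ) (r : ℝ) : ℝ :=
  if r ≤ η then max (κ r) 0 else -c * r

/-- `ψ'(r) = exp(-∫₀^r κ*(v) dv) ∫_r^∞ exp(∫₀^u (κ*(v) + ε v) dv) du`. -/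
noncomputable def psiDeriv (c ε η : ℝ) (κ : ℝ → ℝ) (r : ℝ) : ℝ :=
  Real.exp (-∫ v in (0:ℝ)..r, kappaStar c η κ v) *
    ∫ u in Set.Ioi r, Real.exp (∫ v in (0:ℝ)..u, (kappaStar c η κ v + ε * v))

/-- The auxiliary function `ψ` of Section 2.2. -/
noncomputable def psi (c ε η : ℝ) (κ : ℝ → ℝ) (r : ℝ) : ℝ :=
  ∫ s in (0:ℝ)..r, psiDeriv c ε η κ s

/-- `ψ₁ c ε r = ∫₀^r e^{c s²/2} (∫_s^∞ e^{-(c-ε) u²/2} du) ds`. -/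
noncomputable def psi1 (c ε r : ℝ) : ℝ :=
  ∫ s in (0:ℝ)..r, Real.exp (c * s ^ 2 / 2) * ∫ u in Set.Ioi s, Real.exp (-(c - ε) * u ^ 2 / 2)

/-- Integrability of `kappaStar` on `Ioc 0 b`, given integrability of `κ⁺` near `0`. -/
lemma ks_integrableOn (c η : ℝ) (κ : ℝ → ℝ) (hη : 0 ≤ η)
    (hInt : IntegrableOn (fun v => max (κ v) 0) (Set.Ioc 0 η) volume)
    {b : ℝ} (hb : 0 ≤ b) :
    IntegrableOn (kappaStar c η κ) (Set.Ioc 0 b) volume := by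
  have h1 : IntegrableOn (kappaStar c η κ) (Set.Ioc 0 (min b η)) volume := by
    refine (hInt.mono_set (Set.Ioc_subset_Ioc le_rfl (min_le_right _ _))).congr_fun
      (fun v hv => ?_) measurableSet_Ioc
    simp [kappaStar, le_trans hv.2 (min_le_right b η)]
  have h2 : IntegrableOn (kappaStar c η κ) (Set.Ioc (min b η) b) volume := by
    rcases le_or_gt b η with hbη | hbη
    · simp [min_eq_left hbη]
    · have hm : min b η = η := min_eq_right hbη.le
      rw [hm]
      have hcont : Continuous (fun v : ℝ => -c * v) := continuous_const.mul continuous_id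
      refine (hcont.integrableOn_Ioc (a := η) (b := b)).congr_fun (fun v hv => ?_) measurableSet_Ioc
      simp [kappaStar, not_le.mpr hv.1]
  have := h1.union h2
  rwa [Set.Ioc_union_Ioc_eq_Ioc (le_min hb hη) (min_le_left b η)] at this


lemma ks_add_nonneg (c η : ℝ) (κ : ℝ → ℝ) (hc : 0 < c) {v : ℝ} (hv : 0 ≤ v) :
    0 ≤ kappaStar c η κ v + c * v := by
  unfold kappaStar
  split_ifs with h
  · exact add_nonneg (le_max_right _ _) (by positivity)
  · have : -c * v + c * v = 0 := by ring
    linarith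

lemma G_nonneg (c η : ℝ) (κ : ℝ → ℝ) (hc : 0 < c) {u : ℝ} (hu : 0 ≤ u) :
    0 ≤ ∫ v in (0:ℝ)..u, (kappaStar c η κ v + c * v) :=
  intervalIntegral.integral_nonneg hu (fun v hv => ks_add_nonneg c η κ hc hv.1)

lemma ks_ii (c η : ℝ) (κ : ℝ → ℝ) (hη : 0 ≤ η)
    (hInt : IntegrableOn (fun v => max (κ v) 0) (Set.Ioc 0 η) volume)
    {a b : ℝ} (ha : 0 ≤ a) (hab : a ≤ b) :
    IntervalIntegrable (kappaStar c η κ) volume a b := by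
  rw [intervalIntegrable_iff, Set.uIoc_of_le hab]
  exact (ks_integrableOn c η κ hη hInt (ha.trans hab)).mono_set (Set.Ioc_subset_Ioc ha le_rfl)

lemma f_ii (c η : ℝ) (κ : ℝ → ℝ) (hη : 0 ≤ η)
    (hInt : IntegrableOn (fun v => max (κ v) 0) (Set.Ioc 0 η) volume)
    {a b : ℝ} (ha : 0 ≤ a) (hab : a ≤ b) :
    IntervalIntegrable (fun v => kappaStar c η κ v + c * v) volume a b :=
  (ks_ii c η κ hη hInt ha hab).add ((continuous_const.mul continuous_id).intervalIntegrable a b)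

lemma G_le (c η : ℝ) (κ : ℝ → ℝ) (hc : 0 < c) (hη : 0 ≤ η)
    (hInt : IntegrableOn (fun v => max (κ v) 0) (Set.Ioc 0 η) volume)
    {u : ℝ} (hu : 0 ≤ u) :
    ∫ v in (0:ℝ)..u, (kappaStar c η κ v + c * v) ≤
      ∫ v in (0:ℝ)..η, (kappaStar c η κ v + c * v) := by
  rcases le_or_gt u η with huη | huη
  · have hadd := intervalIntegral.integral_add_adjacent_intervals
      (f_ii c η κ hη hInt le_rfl hu) (f_ii c η κ hη hInt hu huη)
    have hpos : 0 ≤ ∫ v in u..η, (kappaStar c η κ v + c * v) :=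
      intervalIntegral.integral_nonneg huη (fun v hv => ks_add_nonneg c η κ hc (hu.trans hv.1))
    linarith
  · have hzero : (∫ v in η..u, (kappaStar c η κ v + c * v)) = 0 := by
      rw [intervalIntegral.integral_of_le huη.le,
        setIntegral_congr_fun measurableSet_Ioc
          (g := fun _ => (0:ℝ)) (fun v hv => by simp [kappaStar, not_le.mpr hv.1])]
      simp
    have hadd := intervalIntegral.integral_add_adjacent_intervals
      (f_ii c η κ hη hInt le_rfl hη) (f_ii c η κ hη hInt hη huη.le)
    linarith

lemma ks_decomp (c ε η : ℝ) (κ : ℝ → ℝ) (hη : 0 ≤ η)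
    (hInt : IntegrableOn (fun v => max (κ v) 0) (Set.Ioc 0 η) volume)
    {s : ℝ} (hs : 0 ≤ s) :
    (∫ v in (0:ℝ)..s, (kappaStar c η κ v + ε * v)) =
      (∫ v in (0:ℝ)..s, (kappaStar c η κ v + c * v)) - (c - ε) * s ^ 2 / 2 := by
  have h1 : (∫ v in (0:ℝ)..s, (kappaStar c η κ v + ε * v)) =
      ∫ v in (0:ℝ)..s, ((kappaStar c η κ v + c * v) - (c - ε) * v) :=
    intervalIntegral.integral_congr (fun v _ => by ring)
  rw [h1, intervalIntegral.integral_sub (f_ii c η κ hη hInt le_rfl hs)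
    ((by fun_prop : Continuous fun v : ℝ => (c - ε) * v).intervalIntegrable 0 s)]
  have h2 : (∫ v in (0:ℝ)..s, (c - ε) * v) = (c - ε) * s ^ 2 / 2 := by
    rw [intervalIntegral.integral_const_mul, integral_id]
    ring
  rw [h2]


lemma gauss_integrable (c ε : ℝ) (hεc : ε < c) :
    Integrable (fun u : ℝ => Real.exp (-(c - ε) * u ^ 2 / 2)) volume := by
  have hb : 0 < (c - ε) / 2 := by linarith
  have h := integrable_exp_neg_mul_sq hb
  have heq : (fun u : ℝ => Real.exp (-((c - ε) / 2) * u ^ 2)) =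
      fun u : ℝ => Real.exp (-(c - ε) * u ^ 2 / 2) := by
    funext u; congr 1; ring
  rwa [heq] at h

lemma psiDeriv_le (c ε η : ℝ) (κ : ℝ → ℝ) (hc : 0 < c) (hε : 0 < ε) (hεc : ε < c) (hη : 0 ≤ η)
    (hInt : IntegrableOn (fun v => max (κ v) 0) (Set.Ioc 0 η) volume)
    {s : ℝ} (hs : 0 ≤ s) :
    psiDeriv c ε η κ s ≤
      Real.exp (∫ v in (0:ℝ)..η, (kappaStar c η κ v + c * v)) *
        (Real.exp (c * s ^ 2 / 2) * ∫ u in Set.Ioi s, Real.exp (-(c - ε) * u ^ 2 / 2)) := by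
  set A := ∫ v in (0:ℝ)..η, (kappaStar c η κ v + c * v) with hA
  have hks_eq : (∫ v in (0:ℝ)..s, kappaStar c η κ v) =
      (∫ v in (0:ℝ)..s, (kappaStar c η κ v + c * v)) - c * s ^ 2 / 2 := by
    have h0 : (∫ v in (0:ℝ)..s, kappaStar c η κ v) =
        ∫ v in (0:ℝ)..s, (kappaStar c η κ v + (0:ℝ) * v) :=
      intervalIntegral.integral_congr (fun v _ => by ring)
    rw [h0, ks_decomp c 0 η κ hη hInt hs, sub_zero]
  have h1 : Real.exp (-∫ v in (0:ℝ)..s, kappaStar c η κ v) ≤ Real.exp (c * s ^ 2 / 2) := by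
    apply Real.exp_le_exp.mpr
    have := G_nonneg c η κ hc hs
    rw [hks_eq]; linarith
  have hgauss := gauss_integrable c ε hεc
  have hginner : Integrable (fun u : ℝ => Real.exp A * Real.exp (-(c - ε) * u ^ 2 / 2))
      (volume.restrict (Set.Ioi s)) :=
    ((hgauss.const_mul (Real.exp A)).integrableOn : IntegrableOn _ (Set.Ioi s) volume)
  have hmono : (∫ u in Set.Ioi s, Real.exp (∫ v in (0:ℝ)..u, (kappaStar c η κ v + ε * v))) ≤
      ∫ u in Set.Ioi s, Real.exp A * Real.exp (-(c - ε) * u ^ 2 / 2) := by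
    refine integral_mono_of_nonneg
      (Filter.Eventually.of_forall fun u => (Real.exp_pos _).le) hginner ?_
    refine (ae_restrict_iff' measurableSet_Ioi).mpr (Filter.Eventually.of_forall fun u hu => ?_)
    have hu0 : 0 ≤ u := hs.trans (le_of_lt hu)
    dsimp only
    rw [ks_decomp c ε η κ hη hInt hu0]
    have hGle := G_le c η κ hc hη hInt hu0
    calc Real.exp ((∫ v in (0:ℝ)..u, (kappaStar c η κ v + c * v)) - (c - ε) * u ^ 2 / 2)
        ≤ Real.exp (A - (c - ε) * u ^ 2 / 2) := Real.exp_le_exp.mpr (by linarith)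
      _ = Real.exp A * Real.exp (-(c - ε) * u ^ 2 / 2) := by
          rw [← Real.exp_add]; congr 1; ring
  rw [integral_const_mul] at hmono
  have hnn : 0 ≤ ∫ u in Set.Ioi s, Real.exp (∫ v in (0:ℝ)..u, (kappaStar c η κ v + ε * v)) :=
    setIntegral_nonneg measurableSet_Ioi fun u _ => (Real.exp_pos _).le
  unfold psiDeriv
  calc Real.exp (-∫ v in (0:ℝ)..s, kappaStar c η κ v) *
        ∫ u in Set.Ioi s, Real.exp (∫ v in (0:ℝ)..u, (kappaStar c η κ v + ε * v))
      ≤ Real.exp (c * s ^ 2 / 2) *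
        (Real.exp A * ∫ u in Set.Ioi s, Real.exp (-(c - ε) * u ^ 2 / 2)) :=
        mul_le_mul h1 hmono hnn (Real.exp_pos _).le
    _ = Real.exp A * (Real.exp (c * s ^ 2 / 2) *
        ∫ u in Set.Ioi s, Real.exp (-(c - ε) * u ^ 2 / 2)) := by ring

theorem stmt_11 (c ε η : ℝ) (hc : 0 < c) (hε : 0 < ε) (hεc : ε < c) (hη : 0 ≤ η)
    (κ : ℝ → ℝ) (hκcont : ContinuousOn κ (Set.Ioi 0))
    (hκ : ∀ r : ℝ, η ≤ r → κ r ≤ -c * r) :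
    ∀ r : ℝ, 0 ≤ r →
      psi c ε η κ r ≤ Real.exp (∫ v in (0:ℝ)..η, (max (κ v) 0 + c * v)) * psi1 c ε r := by
  intro r hr
  have hpsi1_nonneg : 0 ≤ psi1 c ε r :=
    intervalIntegral.integral_nonneg hr fun s _ =>
      mul_nonneg (Real.exp_pos _).le
        (setIntegral_nonneg measurableSet_Ioi fun u _ => (Real.exp_pos _).le)
  by_cases hInt : IntegrableOn (fun v => max (κ v) 0) (Set.Ioc 0 η) volume
  · set A := ∫ v in (0:ℝ)..η, (kappaStar c η κ v + c * v) with hA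
    have hA' : (∫ v in (0:ℝ)..η, (max (κ v) 0 + c * v)) = A := by
      refine intervalIntegral.integral_congr fun v hv => ?_
      rw [Set.uIcc_of_le hη] at hv
      simp [kappaStar, hv.2]
    rw [hA']
    have hgauss := gauss_integrable c ε hεc
    set C := ∫ u in Set.Ioi (0:ℝ), Real.exp (-(c - ε) * u ^ 2 / 2) with hC
    have hIoi : ∀ s : ℝ, 0 ≤ s → (∫ u in Set.Ioi s, Real.exp (-(c - ε) * u ^ 2 / 2)) =
        C - ∫ u in (0:ℝ)..s, Real.exp (-(c - ε) * u ^ 2 / 2) := by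
      intro s hs
      have hunion := setIntegral_union (f := fun u : ℝ => Real.exp (-(c - ε) * u ^ 2 / 2))
        (μ := volume) (s := Set.Ioc (0:ℝ) s) (t := Set.Ioi s)
        (Set.Ioc_disjoint_Ioi le_rfl) measurableSet_Ioi
        hgauss.integrableOn hgauss.integrableOn
      rw [Set.Ioc_union_Ioi_eq_Ioi hs] at hunion
      rw [intervalIntegral.integral_of_le hs, hC, hunion]; ring
    have hgausscont : Continuous (fun u : ℝ => Real.exp (-(c - ε) * u ^ 2 / 2)) := by fun_prop
    have hgc : Continuous (fun s : ℝ => Real.exp A * (Real.exp (c * s ^ 2 / 2) *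
        (C - ∫ u in (0:ℝ)..s, Real.exp (-(c - ε) * u ^ 2 / 2)))) := by
      refine continuous_const.mul ((by fun_prop : Continuous fun s : ℝ =>
        Real.exp (c * s ^ 2 / 2)).mul (continuous_const.sub
        (intervalIntegral.continuous_primitive
          (fun a b => hgausscont.intervalIntegrable a b) 0)))
    have hgint : IntegrableOn (fun s : ℝ => Real.exp A * (Real.exp (c * s ^ 2 / 2) *
        ∫ u in Set.Ioi s, Real.exp (-(c - ε) * u ^ 2 / 2))) (Set.Ioc 0 r) volume := by
      refine (hgc.integrableOn_Ioc (a := 0) (b := r)).congr_fun (fun s hs => ?_) measurableSet_Ioc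
      rw [hIoi s hs.1.le]
    have hmono : (∫ s in Set.Ioc (0:ℝ) r, psiDeriv c ε η κ s) ≤
        ∫ s in Set.Ioc (0:ℝ) r, Real.exp A * (Real.exp (c * s ^ 2 / 2) *
          ∫ u in Set.Ioi s, Real.exp (-(c - ε) * u ^ 2 / 2)) := by
      refine integral_mono_of_nonneg ?_ hgint ?_
      · refine Filter.Eventually.of_forall fun s => ?_
        unfold psiDeriv
        exact mul_nonneg (Real.exp_pos _).le
          (setIntegral_nonneg measurableSet_Ioi fun u _ => (Real.exp_pos _).le)
      · exact (ae_restrict_iff' measurableSet_Ioc).mpr (Filter.Eventually.of_forall fun s hs =>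
          psiDeriv_le c ε η κ hc hε hεc hη hInt hs.1.le)
    rw [psi, intervalIntegral.integral_of_le hr]
    calc (∫ s in Set.Ioc (0:ℝ) r, psiDeriv c ε η κ s)
        ≤ ∫ s in Set.Ioc (0:ℝ) r, Real.exp A * (Real.exp (c * s ^ 2 / 2) *
            ∫ u in Set.Ioi s, Real.exp (-(c - ε) * u ^ 2 / 2)) := hmono
      _ = Real.exp A * psi1 c ε r := by
          rw [integral_const_mul, psi1, intervalIntegral.integral_of_le hr]
  · have hη0 : 0 < η := by
      by_contra h
      push_neg at h
      exact hInt (by rw [Set.Ioc_eq_empty (not_lt.mpr h)]; exact integrableOn_empty)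
    have hNI : ∀ u : ℝ, 0 < u →
        ¬ IntegrableOn (fun v => kappaStar c η κ v + ε * v) (Set.Ioc 0 u) volume := by
      intro u hu hint
      have hεint : IntegrableOn (fun v : ℝ => ε * v) (Set.Ioc (0:ℝ) u) volume :=
        (by fun_prop : Continuous fun v : ℝ => ε * v).integrableOn_Ioc
      have hsub : IntegrableOn ((fun v => kappaStar c η κ v + ε * v) - fun v : ℝ => ε * v)
          (Set.Ioc 0 u) volume := hint.sub hεint
      have hks : IntegrableOn (kappaStar c η κ) (Set.Ioc 0 u) volume :=
        hsub.congr_fun (fun v hv => by simp) measurableSet_Ioc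
      have hm : 0 < min u η := lt_min hu hη0
      have h1 : IntegrableOn (fun v => max (κ v) 0) (Set.Ioc 0 (min u η)) volume :=
        (hks.mono_set (Set.Ioc_subset_Ioc le_rfl (min_le_left _ _))).congr_fun
          (fun v hv => by simp [kappaStar, le_trans hv.2 (min_le_right u η)]) measurableSet_Ioc
      have h2 : IntegrableOn (fun v => max (κ v) 0) (Set.Ioc (min u η) η) volume := by
        have hcont : ContinuousOn (fun v => max (κ v) 0) (Set.Icc (min u η) η) := by
          refine ContinuousOn.sup (hκcont.mono ?_) continuousOn_const
          intro x hx
          exact lt_of_lt_of_le hm hx.1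
        exact hcont.integrableOn_Icc.mono_set Set.Ioc_subset_Icc_self
      have hun := h1.union h2
      rw [Set.Ioc_union_Ioc_eq_Ioc hm.le (min_le_right u η)] at hun
      exact hInt hun
    have hD0 : ∀ s : ℝ, 0 ≤ s → psiDeriv c ε η κ s = 0 := by
      intro s hs
      unfold psiDeriv
      have hin : (∫ u in Set.Ioi s, Real.exp (∫ v in (0:ℝ)..u, (kappaStar c η κ v + ε * v))) =
          ∫ u in Set.Ioi s, (1:ℝ) := by
        refine setIntegral_congr_fun measurableSet_Ioi fun u hu => ?_
        have hu0 : 0 < u := lt_of_le_of_lt hs hu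
        rw [intervalIntegral.integral_undef, Real.exp_zero]
        rw [intervalIntegrable_iff, Set.uIoc_of_le hu0.le]
        exact hNI u hu0
      rw [hin, setIntegral_const]
      simp [Measure.real, Real.volume_Ioi]
    have hpsi0 : psi c ε η κ r = 0 := by
      rw [psi, intervalIntegral.integral_of_le hr,
        setIntegral_congr_fun measurableSet_Ioc (g := fun _ => (0:ℝ))
          (fun s hs => hD0 s hs.1.le)]
      simp
    have hA0 : (∫ v in (0:ℝ)..η, (max (κ v) 0 + c * v)) = 0 := by
      apply intervalIntegral.integral_undef
      intro h
      rw [intervalIntegrable_iff, Set.uIoc_of_le hη] at h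
      have hcint : IntegrableOn (fun v : ℝ => c * v) (Set.Ioc (0:ℝ) η) volume :=
        (by fun_prop : Continuous fun v : ℝ => c * v).integrableOn_Ioc
      have hsub : IntegrableOn ((fun v => max (κ v) 0 + c * v) - fun v : ℝ => c * v)
          (Set.Ioc 0 η) volume := h.sub hcint
      exact hInt (hsub.congr_fun (fun v hv => by simp) measurableSet_Ioc)
    rw [hpsi0, hA0, Real.exp_zero, one_mul]
    exact hpsi1_nonneg
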